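/- Let G be a group and A a normal subgroup of G with an ascending (transfinite) series of G-invariant subgroups 1 = A_0 ≤ A_1 ≤ ... ≤ A_γ = A, continuous at limit ordinals, such that [G, A_{α+1}/A_α] = A_{α+1}/A_α for all α < γ. Then [G, A] = A. -/

import Mathlib

/-- If a normal subgroup `A` of `G` has an ascending series of `G`-invariant subgroups
`1 = A₀ ≤ A₁ ≤ ⋯ ≤ A_γ = A`, continuous at limit ordinals, with
`[G, A_{α+1}] A_α = A_{α+1}` for all `α < γ`, then `[G, A] = A`. -/
theorem commutator_eq_self_of_series {G : Type*} [Group G] (A : Subgroup G) [A.Normal]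
    (γ : Ordinal) (f : Ordinal → Subgroup G)
    (h0 : f 0 = ⊥) (hγ : f γ = A) (hmono : Monotone f)
    (hnorm : ∀ α, (f α).Normal)
    (hlim : ∀ α ≤ γ, Order.IsSuccLimit α → f α = ⨆ β < α, f β)
    (hstep : ∀ α < γ, ⁅(⊤ : Subgroup G), f (α + 1)⁆ ⊔ f α = f (α + 1)) :
    ⁅(⊤ : Subgroup G), A⁆ = A := by
  refine le_antisymm (Subgroup.commutator_le_right _ _) ?_
  have key : ∀ α, α ≤ γ → f α ≤ ⁅(⊤ : Subgroup G), A⁆ := by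
    intro α
    induction α using Ordinal.limitRecOn with
    | zero => intro _; simp [h0]
    | add_one β ih =>
      intro hβγ
      have hβ : β < γ := lt_of_lt_of_le (Order.lt_add_one_iff.mpr le_rfl) hβγ
      rw [← hstep β hβ]
      refine sup_le ?_ (ih hβ.le)
      calc ⁅(⊤ : Subgroup G), f (β + 1)⁆ ≤ ⁅(⊤ : Subgroup G), A⁆ := by
            apply Subgroup.commutator_mono le_rfl
            rw [← hγ]; exact hmono hβγ
    | limit β hβlim ih =>
      intro hβγ
      rw [hlim β hβγ hβlim]
      exact iSup₂_le fun δ hδ => ih δ hδ (le_of_lt (lt_of_lt_of_le hδ hβγ))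
  exact hγ ▸ key γ le_rfl
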